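/- Let g₁, g₂ be bijective isometries of H² and z₁, z₂ ∈ H² such that for i = 1, 2 the displacement d(zᵢ, gᵢ(zᵢ)) is positive and equals the infimum over all w ∈ H² of d(w, gᵢ(w)) (i.e., each gᵢ is hyperbolic and zᵢ lies on its invariant axis). Let γ(x₁,x₂) = (g₁(x₁), g₂(x₂)) and 𝐳 = (z₁,z₂). Then the Dirichlet domain of the cyclic group ⟨γ⟩ with basepoint 𝐳 is two-faced: for every 𝐰 in the bidisk with ρ(𝐰,𝐳) ≤ ρ(𝐰,γ(𝐳)) and ρ(𝐰,𝐳) ≤ ρ(𝐰,γ⁻¹(𝐳)), one has ρ(𝐰,𝐳) ≤ ρ(𝐰,γⁿ(𝐳)) for every integer n. -/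

import Mathlib

open UpperHalfPlane

noncomputable section

/-- The bidisk `ℍ × ℍ` with the `ℓ²` product metric. -/
abbrev Bidisk : Type := WithLp 2 (UpperHalfPlane × UpperHalfPlane)

/-- Package a pair of points of `ℍ` as a point of the bidisk. -/
def toBD (p : UpperHalfPlane × UpperHalfPlane) : Bidisk := (WithLp.equiv 2 _).symm p

namespace DirichletTwoFaced

lemma cosh_dist_coords (z w : ℍ) :
    Real.cosh (dist z w) =
      1 + ((z.re - w.re) ^ 2 + (z.im - w.im) ^ 2) / (2 * z.im * w.im) := by
  rw [UpperHalfPlane.cosh_dist]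
  congr 2
  rw [Complex.dist_eq_re_im, Real.sq_sqrt (by positivity)]
  simp

lemma cosh_inj_nonneg {r s : ℝ} (hr : 0 ≤ r) (hs : 0 ≤ s)
    (h : Real.cosh r = Real.cosh s) : r = s := by
  have h1 := Real.cosh_le_cosh.mp h.le
  have h2 := Real.cosh_le_cosh.mp h.ge
  rw [abs_of_nonneg hr, abs_of_nonneg hs] at h1 h2
  linarith

lemma exists_median (x y : ℍ) : ∃ m : ℍ,
    dist x m = dist x y / 2 ∧ dist m y = dist x y / 2 ∧
    ∀ w : ℍ, Real.cosh (dist w x) + Real.cosh (dist w y)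
      = 2 * Real.cosh (dist w m) * Real.cosh (dist x y / 2) := by
  have hv : 0 < x.im := x.im_pos
  have hq : 0 < y.im := y.im_pos
  set K : ℝ := 2 * Real.cosh (dist x y / 2) with hKdef
  have hKpos : 0 < K := by positivity
  have hdd : Real.cosh (dist x y) = 2 * Real.cosh (dist x y / 2) ^ 2 - 1 := by
    have h1 := Real.cosh_two_mul (dist x y / 2)
    have h2 : 2 * (dist x y / 2) = dist x y := by ring
    have h3 := Real.sinh_sq (dist x y / 2)
    rw [h2] at h1
    linarith
  have hK2 : K ^ 2 * (x.im * y.im) =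
      4 * (x.im * y.im) + ((x.re - y.re) ^ 2 + (x.im - y.im) ^ 2) := by
    have h1 : K ^ 2 = 2 * Real.cosh (dist x y) + 2 := by rw [hKdef, hdd]; ring
    rw [h1, cosh_dist_coords x y]
    field_simp
    ring
  set m : ℍ := UpperHalfPlane.mk ⟨(x.re * y.im + y.re * x.im) / (x.im + y.im),
      K * x.im * y.im / (x.im + y.im)⟩ (by positivity) with hm
  have hmre : m.re = (x.re * y.im + y.re * x.im) / (x.im + y.im) := rfl
  have hmim : m.im = K * x.im * y.im / (x.im + y.im) := rfl
  have hmw : ∀ w : ℍ, Real.cosh (dist w m) * (2 * w.im * K * x.im * y.im * (x.im + y.im)) =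
      2 * w.im * K * x.im * y.im * (x.im + y.im)
      + (w.re * (x.im + y.im) - (x.re * y.im + y.re * x.im)) ^ 2
      + (w.im * (x.im + y.im) - K * x.im * y.im) ^ 2 := by
    intro w
    have hb : 0 < w.im := w.im_pos
    rw [cosh_dist_coords w m, hmre, hmim]
    field_simp
    ring
  have hdxy : (0:ℝ) ≤ dist x y / 2 := div_nonneg dist_nonneg (by norm_num)
  have hxm : dist x m = dist x y / 2 := by
    have e1 : (Real.cosh (dist x m) * 2 - K) * (x.im * K * x.im * y.im * (x.im + y.im)) = 0 := by
      have h := hmw x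
      rw [dist_comm x m] at *
      linear_combination h - x.im ^ 2 * hK2
    have e2 : Real.cosh (dist x m) * 2 - K = 0 := by
      rcases mul_eq_zero.mp e1 with h | h
      · exact h
      · exact absurd h (by positivity)
    have hcosh : Real.cosh (dist x m) = Real.cosh (dist x y / 2) := by
      rw [hKdef] at e2; linarith
    exact cosh_inj_nonneg dist_nonneg hdxy hcosh
  have hmy : dist m y = dist x y / 2 := by
    have e1 : (Real.cosh (dist y m) * 2 - K) * (y.im * K * x.im * y.im * (x.im + y.im)) = 0 := by
      linear_combination hmw y - y.im ^ 2 * hK2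
    have e2 : Real.cosh (dist y m) * 2 - K = 0 := by
      rcases mul_eq_zero.mp e1 with h | h
      · exact h
      · exact absurd h (by positivity)
    have hcosh : Real.cosh (dist m y) = Real.cosh (dist x y / 2) := by
      rw [dist_comm m y, hKdef] at *; linarith
    exact cosh_inj_nonneg dist_nonneg hdxy hcosh
  refine ⟨m, hxm, hmy, fun w => ?_⟩
  have hb : 0 < w.im := w.im_pos
  have hx : Real.cosh (dist w x) * (2 * w.im * x.im) =
      2 * w.im * x.im + ((w.re - x.re) ^ 2 + (w.im - x.im) ^ 2) := by
    rw [cosh_dist_coords w x]; field_simp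
  have hy : Real.cosh (dist w y) * (2 * w.im * y.im) =
      2 * w.im * y.im + ((w.re - y.re) ^ 2 + (w.im - y.im) ^ 2) := by
    rw [cosh_dist_coords w y]; field_simp
  have key : (Real.cosh (dist w x) + Real.cosh (dist w y) - Real.cosh (dist w m) * K)
      * (2 * w.im * K * x.im * y.im * (x.im + y.im) ^ 2) = 0 := by
    linear_combination K * y.im * (x.im + y.im) ^ 2 * hx + K * x.im * (x.im + y.im) ^ 2 * hy
      - K * (x.im + y.im) * hmw w - K * x.im * y.im * (x.im + y.im) * hK2
  have e2 : Real.cosh (dist w x) + Real.cosh (dist w y) - Real.cosh (dist w m) * K = 0 := by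
    rcases mul_eq_zero.mp key with h | h
    · exact h
    · exact absurd h (by positivity)
  rw [hKdef] at e2
  linarith

lemma median_eq (x y m : ℍ) (h1 : dist x m = dist x y / 2) (h2 : dist m y = dist x y / 2) :
    ∀ w : ℍ, Real.cosh (dist w x) + Real.cosh (dist w y)
      = 2 * Real.cosh (dist w m) * Real.cosh (dist x y / 2) := by
  obtain ⟨m₀, g1, g2, gid⟩ := exists_median x y
  have hcpos : 0 < Real.cosh (dist x y / 2) := Real.cosh_pos _
  have hmm : m = m₀ := by
    have h := gid m
    rw [dist_comm m x, h1, h2] at h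
    have hone : Real.cosh (dist m m₀) = 1 := by nlinarith
    have hz : dist m m₀ = 0 :=
      cosh_inj_nonneg dist_nonneg (le_refl 0) (by rw [hone, Real.cosh_zero])
    exact dist_eq_zero.mp hz
  rw [hmm]; exact gid

lemma convex_of_midpoint (x y m : ℍ) (h1 : dist x m = dist x y / 2)
    (h2 : dist m y = dist x y / 2) (w : ℍ) :
    2 * dist w m ≤ dist w x + dist w y := by
  have hid := median_eq x y m h1 h2 w
  set A := dist w x with hA
  set B := dist w y with hB
  set M := dist w m with hM
  set L := dist x y / 2 with hL
  have hLnn : 0 ≤ L := div_nonneg dist_nonneg (by norm_num)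
  have habs : |A - B| ≤ 2 * L := by
    have h := abs_dist_sub_le x y w
    rw [dist_comm x w, dist_comm y w] at h
    rw [hL]; rw [hA, hB]
    linarith [h]
  have e₁ := Real.cosh_add ((A + B) / 2) ((A - B) / 2)
  have e₂ := Real.cosh_sub ((A + B) / 2) ((A - B) / 2)
  have r₁ : (A + B) / 2 + (A - B) / 2 = A := by ring
  have r₂ : (A + B) / 2 - (A - B) / 2 = B := by ring
  rw [r₁] at e₁
  rw [r₂] at e₂
  have hc1 : Real.cosh ((A - B) / 2) ≤ Real.cosh L := by
    apply Real.cosh_le_cosh.mpr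
    rw [abs_of_nonneg hLnn, abs_div]
    rw [show |(2:ℝ)| = 2 by norm_num]
    linarith [habs]
  have hcpos : (0:ℝ) < Real.cosh ((A + B) / 2) := Real.cosh_pos _
  have hLpos : (0:ℝ) < Real.cosh L := Real.cosh_pos _
  have hMle : Real.cosh M ≤ Real.cosh ((A + B) / 2) := by
    have hmul : 2 * Real.cosh M * Real.cosh L
        ≤ 2 * Real.cosh ((A + B) / 2) * Real.cosh L := by
      calc 2 * Real.cosh M * Real.cosh L = Real.cosh A + Real.cosh B := hid.symm
        _ = 2 * Real.cosh ((A + B) / 2) * Real.cosh ((A - B) / 2) := by linarith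
        _ ≤ 2 * Real.cosh ((A + B) / 2) * Real.cosh L := by nlinarith
    have := le_of_mul_le_mul_right (by linarith : Real.cosh M * Real.cosh L ≤ Real.cosh ((A + B) / 2) * Real.cosh L) hLpos
    exact this
  have hfin := Real.cosh_le_cosh.mp hMle
  rw [abs_of_nonneg (dist_nonneg : (0:ℝ) ≤ M),
    abs_of_nonneg (by positivity : (0:ℝ) ≤ (A + B) / 2)] at hfin
  linarith

lemma two_step (g : ℍ ≃ᵢ ℍ) (z : ℍ)
    (hmin : dist z (g z) = ⨅ w : ℍ, dist w (g w)) :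
    dist z (g (g z)) = 2 * dist z (g z) := by
  obtain ⟨m, h1, h2, hid⟩ := exists_median z (g z)
  have hbdd : BddBelow (Set.range fun w : ℍ => dist w (g w)) := by
    refine ⟨0, ?_⟩
    rintro r ⟨w, rfl⟩
    exact dist_nonneg
  have hle : dist z (g z) ≤ dist m (g m) := by
    rw [hmin]
    exact ciInf_le hbdd m
  have hgd : dist (g z) (g (g z)) = dist z (g z) := g.isometry.dist_eq z (g z)
  have him := median_eq (g z) (g (g z)) (g m)
    (by rw [g.isometry.dist_eq z m, hgd]; exact h1)
    (by rw [g.isometry.dist_eq m (g z), hgd]; exact h2)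
  have e1 := hid (g m)
  have e2 := him z
  rw [hgd] at e2
  have hgm : dist (g m) (g z) = dist z (g z) / 2 := by
    rw [g.isometry.dist_eq m z, dist_comm m z]
    exact h1
  rw [hgm, dist_comm (g m) z, dist_comm (g m) m] at e1
  set ℓ := dist z (g z) with hℓ
  set D := dist z (g (g z)) with hD
  set t := Real.cosh (ℓ / 2) with ht
  set X := Real.cosh (dist m (g m)) with hXd
  have htpos : 0 < t := Real.cosh_pos _
  have ht2 : 2 * t ^ 2 = Real.cosh ℓ + 1 := by
    have a1 := Real.cosh_two_mul (ℓ / 2)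
    have a2 : 2 * (ℓ / 2) = ℓ := by ring
    have a3 := Real.sinh_sq (ℓ / 2)
    rw [a2] at a1
    rw [ht]
    linarith
  have hX : Real.cosh ℓ ≤ X := by
    rw [hXd]
    apply Real.cosh_le_cosh.mpr
    rw [abs_of_nonneg dist_nonneg, abs_of_nonneg dist_nonneg]
    exact hle
  have hP : Real.cosh (dist z (g m)) = 2 * X * t - t := by linarith
  have hDD : Real.cosh D = 2 * (2 * X * t - t) * t - Real.cosh ℓ := by
    rw [← hP]
    linarith
  have hDc : Real.cosh D
      = 2 * X * (Real.cosh ℓ + 1) - (Real.cosh ℓ + 1) - Real.cosh ℓ := by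
    linear_combination hDD + (2 * X - 1) * ht2
  have hcD : Real.cosh (2 * ℓ) ≤ Real.cosh D := by
    have h2l := Real.cosh_two_mul ℓ
    have h2s := Real.sinh_sq ℓ
    have hprod : 0 ≤ (X - Real.cosh ℓ) * (Real.cosh ℓ + 1) :=
      mul_nonneg (by linarith) (by nlinarith [Real.cosh_pos ℓ])
    nlinarith
  have hDge : 2 * ℓ ≤ D := by
    have h := Real.cosh_le_cosh.mp hcD
    have hl0 : (0:ℝ) ≤ ℓ := dist_nonneg
    rw [abs_of_nonneg (by linarith : (0:ℝ) ≤ 2 * ℓ), abs_of_nonneg dist_nonneg] at h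
    exact h
  have hDle : D ≤ 2 * ℓ := by
    have h := dist_triangle z (g z) (g (g z))
    rw [hgd] at h
    rw [hD]
    linarith
  linarith

lemma pow_shift (g : ℍ ≃ᵢ ℍ) (z : ℍ) (n : ℤ) :
    (g ^ (n + 1)) z = (g ^ n) (g z) := by
  rw [zpow_add_one]
  rfl

lemma dist_convex_step (g : ℍ ≃ᵢ ℍ) (z : ℍ)
    (hmin : dist z (g z) = ⨅ w : ℍ, dist w (g w)) (n : ℤ) (w : ℍ) :
    2 * dist w ((g ^ n) z) ≤ dist w ((g ^ (n - 1)) z) + dist w ((g ^ (n + 1)) z) := by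
  have h2step := two_step g z hmin
  have hn1 : (g ^ n) z = (g ^ (n - 1)) (g z) := by
    have h := pow_shift g z (n - 1)
    rwa [show n - 1 + 1 = n from by ring] at h
  have hn2 : (g ^ (n + 1)) z = (g ^ (n - 1)) (g (g z)) := by
    rw [pow_shift g z n]
    have h := pow_shift g (g z) (n - 1)
    rwa [show n - 1 + 1 = n from by ring] at h
  have hdxy : dist ((g ^ (n - 1)) z) ((g ^ (n + 1)) z) = 2 * dist z (g z) := by
    rw [hn2, (g ^ (n - 1)).isometry.dist_eq z (g (g z)), h2step]
  have hd1 : dist ((g ^ (n - 1)) z) ((g ^ n) z) = dist z (g z) := by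
    rw [hn1, (g ^ (n - 1)).isometry.dist_eq z (g z)]
  have hd2 : dist ((g ^ n) z) ((g ^ (n + 1)) z) = dist z (g z) := by
    rw [pow_shift g z n, (g ^ n).isometry.dist_eq z (g z)]
  exact convex_of_midpoint ((g ^ (n - 1)) z) ((g ^ (n + 1)) z) ((g ^ n) z)
    (by rw [hd1, hdxy]; ring) (by rw [hd2, hdxy]; ring) w

lemma seq_mono (c : ℤ → ℝ) (h1 : c 0 ≤ c 1)
    (hconv : ∀ n : ℤ, 2 * c n ≤ c (n - 1) + c (n + 1)) :
    ∀ n : ℤ, 0 ≤ n → c 0 ≤ c n := by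
  have step : ∀ n : ℤ, 0 ≤ n → c n ≤ c (n + 1) := by
    refine Int.le_induction h1 ?_
    intro k hk ih
    have h := hconv (k + 1)
    rw [show k + 1 - 1 = k from by ring] at h
    linarith
  refine Int.le_induction (le_refl _) ?_
  intro k hk ih
  exact ih.trans (step k hk)

open scoped ENNReal in
lemma bidisk_dist (w : Bidisk) (a b : ℍ) :
    dist w (toBD (a, b)) =
      Real.sqrt (dist w.fst a ^ 2 + dist w.snd b ^ 2) := by
  show dist w ((WithLp.equiv 2 (ℍ × ℍ)).symm (a, b)) = _
  rw [WithLp.prod_dist_eq_add (by norm_num : 0 < (2 : ℝ≥0∞).toReal)]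
  have h1 : ((WithLp.equiv 2 (ℍ × ℍ)).symm (a, b)).fst = a := rfl
  have h2 : ((WithLp.equiv 2 (ℍ × ℍ)).symm (a, b)).snd = b := rfl
  rw [h1, h2, ENNReal.toReal_ofNat, Real.sqrt_eq_rpow,
    ← Real.rpow_natCast (dist w.fst a) 2, ← Real.rpow_natCast (dist w.snd b) 2]
  norm_num

lemma sqrt_le_rev {x y : ℝ} (hx : 0 ≤ x) (hy : 0 ≤ y)
    (h : Real.sqrt x ≤ Real.sqrt y) : x ≤ y := by
  nlinarith [Real.sq_sqrt hx, Real.sq_sqrt hy, Real.sqrt_nonneg x, Real.sqrt_nonneg y]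

lemma sq_step {x a b : ℝ} (hx : 0 ≤ x) (ha : 0 ≤ a) (hb : 0 ≤ b)
    (h : 2 * x ≤ a + b) : 2 * x ^ 2 ≤ a ^ 2 + b ^ 2 := by
  nlinarith [sq_nonneg (a - b), mul_nonneg (by linarith : (0:ℝ) ≤ a + b - 2 * x)
    (by linarith : (0:ℝ) ≤ a + b + 2 * x)]

end DirichletTwoFaced

open DirichletTwoFaced

/-- If `γ = (g₁,g₂)` with both `gᵢ` hyperbolic and `𝐳 = (z₁,z₂)` lies on the
`γ`-invariant flat, then the Dirichlet domain of `⟨γ⟩` based at `𝐳` is two-faced: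
any point `𝐰` with `ρ(𝐰,𝐳) ≤ ρ(𝐰,γ(𝐳))` and `ρ(𝐰,𝐳) ≤ ρ(𝐰,γ⁻¹(𝐳))` satisfies
`ρ(𝐰,𝐳) ≤ ρ(𝐰,γⁿ(𝐳))` for every integer `n`. -/
theorem dirichlet_domain_two_faced
    (g₁ g₂ : UpperHalfPlane ≃ᵢ UpperHalfPlane) (z₁ z₂ : UpperHalfPlane)
    (h₁pos : 0 < dist z₁ (g₁ z₁))
    (h₁min : dist z₁ (g₁ z₁) = ⨅ w : UpperHalfPlane, dist w (g₁ w))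
    (h₂pos : 0 < dist z₂ (g₂ z₂))
    (h₂min : dist z₂ (g₂ z₂) = ⨅ w : UpperHalfPlane, dist w (g₂ w)) :
    ∀ w : Bidisk,
      dist w (toBD (z₁, z₂)) ≤ dist w (toBD (g₁ z₁, g₂ z₂)) →
      dist w (toBD (z₁, z₂)) ≤ dist w (toBD (g₁.symm z₁, g₂.symm z₂)) →
      ∀ n : ℤ, dist w (toBD (z₁, z₂)) ≤ dist w (toBD ((g₁ ^ n) z₁, (g₂ ^ n) z₂)) := by
  intro w hw1 hw2 n
  set c : ℤ → ℝ := fun k => dist w.fst ((g₁ ^ k) z₁) ^ 2 + dist w.snd ((g₂ ^ k) z₂) ^ 2 with hc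
  have hzero : ∀ (g : ℍ ≃ᵢ ℍ) (z : ℍ), (g ^ (0:ℤ)) z = z := by
    intro g z; rw [zpow_zero]; rfl
  have hone : ∀ (g : ℍ ≃ᵢ ℍ) (z : ℍ), (g ^ (1:ℤ)) z = g z := by
    intro g z; rw [zpow_one]
  have hnegone : ∀ (g : ℍ ≃ᵢ ℍ) (z : ℍ), (g ^ (-1:ℤ)) z = g.symm z := by
    intro g z; rw [zpow_neg_one]; rfl
  have hcnn : ∀ k : ℤ, 0 ≤ c k := by intro k; rw [hc]; positivity
  have hc0 : dist w (toBD (z₁, z₂)) = Real.sqrt (c 0) := by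
    rw [bidisk_dist, hc]
    simp only [hzero]
  have hck : ∀ k : ℤ, dist w (toBD ((g₁ ^ k) z₁, (g₂ ^ k) z₂)) = Real.sqrt (c k) := by
    intro k
    rw [bidisk_dist, hc]
  have hcone : c 0 ≤ c 1 := by
    apply sqrt_le_rev (hcnn 0) (hcnn 1)
    rw [← hc0, ← hck 1, hone, hone]
    exact hw1
  have hcnegone : c 0 ≤ c (-1) := by
    apply sqrt_le_rev (hcnn 0) (hcnn (-1))
    rw [← hc0, ← hck (-1), hnegone, hnegone]
    exact hw2
  have hconv : ∀ k : ℤ, 2 * c k ≤ c (k - 1) + c (k + 1) := by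
    intro k
    have ha := dist_convex_step g₁ z₁ h₁min k w.fst
    have hb := dist_convex_step g₂ z₂ h₂min k w.snd
    have sa := sq_step dist_nonneg dist_nonneg dist_nonneg ha
    have sb := sq_step dist_nonneg dist_nonneg dist_nonneg hb
    rw [hc]
    dsimp only
    linarith
  have main : c 0 ≤ c n := by
    rcases le_or_gt 0 n with hn | hn
    · exact seq_mono c hcone hconv n hn
    · have hneg := seq_mono (fun k => c (-k))
        (by simpa using hcnegone)
        (by
          intro k
          have h := hconv (-k)
          have e1 : -k - 1 = -(k + 1) := by ring
          have e2 : -k + 1 = -(k - 1) := by ring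
          rw [e1, e2] at h
          linarith) (-n) (by linarith)
      simpa using hneg
  rw [hc0, hck n]
  exact Real.sqrt_le_sqrt main
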